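/- For all integers r ≥ 0, m ≥ 2, and n ≥ 1, the following recurrence holds in ℚ: (m+r) · S_m^{(r)}(n) = m · (n + r/2) · S_{m-1}^{(r)}(n) − r · Σ_{k=1}^{m-2} C(m,k) · B_{m-k} · S_k^{(r)}(n), where B_j is the j-th Bernoulli number (with B_1 = −1/2) and the sum is empty when m = 2. -/

import Mathlib

/-- Hyper-sum of powers of integers: `S m 0 n = n^m` and
`S m (r+1) n = ∑ i in [1..n], S m r i`. -/
def S (m : ℕ) : ℕ → ℕ → ℚ
  | 0, n => (n : ℚ) ^ m
  | r + 1, n => ∑ i ∈ Finset.Icc 1 n, S m r i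


lemma G (p r : ℕ) : ∀ n : ℕ,
    S (p+2) r n + ((p:ℚ)+2)/2 * S (p+1) r n
      + ∑ k ∈ Finset.Icc 1 p, ((p+2).choose k : ℚ) * bernoulli (p+2-k) * S k r n
    = ((p:ℚ)+2) * S (p+1) (r+1) n := by
  induction r with
  | zero =>
    intro n
    show (n:ℚ)^(p+2) + ((p:ℚ)+2)/2 * (n:ℚ)^(p+1)
      + ∑ k ∈ Finset.Icc 1 p, ((p+2).choose k : ℚ) * bernoulli (p+2-k) * (n:ℚ)^k
      = ((p:ℚ)+2) * ∑ i ∈ Finset.Icc 1 n, (i:ℚ)^(p+1)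
    have key := sum_Ico_pow n (p+1)
    have h1 : Finset.Icc 1 n = Finset.Ico 1 (n+1) := rfl
    rw [h1, key, Finset.mul_sum]
    push_cast
    have hne : ((p:ℚ)+1+1) ≠ 0 := by positivity
    have h2 : ∀ i ∈ Finset.range (p+2),
        ((p:ℚ)+2) * (bernoulli' i * ((p+1+1).choose i) * (n:ℚ)^(p+1+1-i) / ((p:ℚ)+1+1))
          = bernoulli' i * ((p+2).choose i) * (n:ℚ)^(p+2-i) := by
      intro i _
      rw [mul_div_assoc']
      rw [show ((p:ℚ)+2) = ((p:ℚ)+1+1) by ring, mul_comm, mul_div_assoc, div_self hne, mul_one]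
    rw [show p+1+1 = p+2 from rfl, Finset.sum_congr rfl h2]
    rw [Finset.sum_range_succ', Finset.sum_range_succ']
    simp only [bernoulli'_zero, bernoulli'_one, Nat.choose_one_right, Nat.choose_zero_right]
    have h3 : ∑ k ∈ Finset.Icc 1 p, ((p+2).choose k : ℚ) * bernoulli (p+2-k) * (n:ℚ)^k
        = ∑ k ∈ Finset.range p, bernoulli' (k+1+1) * ((p+2).choose (k+1+1) : ℚ) * (n:ℚ)^(p+2-(k+1+1)) := by
      refine Finset.sum_nbij' (fun k => p - k) (fun i => p - i) ?_ ?_ ?_ ?_ ?_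
      · intro a ha; simp only [Finset.mem_Icc] at ha; simp only [Finset.mem_range]; omega
      · intro a ha; simp only [Finset.mem_range] at ha; simp only [Finset.mem_Icc]; omega
      · intro a ha; simp only [Finset.mem_Icc] at ha; omega
      · intro a ha; simp only [Finset.mem_range] at ha; omega
      · intro a ha
        simp only [Finset.mem_Icc] at ha
        have e1 : p - a + 1 + 1 = p + 2 - a := by omega
        have e2 : p + 2 - (p + 2 - a) = a := by omega
        rw [e1, e2, Nat.choose_symm (by omega : a ≤ p + 2),
          bernoulli_eq_bernoulli'_of_ne_one (by omega)]
        ring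
    rw [h3]
    simp [Nat.choose_one_right]
    ring
  | succ r ih =>
    intro n
    show (∑ i ∈ Finset.Icc 1 n, S (p+2) r i) + ((p:ℚ)+2)/2 * ∑ i ∈ Finset.Icc 1 n, S (p+1) r i
      + ∑ k ∈ Finset.Icc 1 p, ((p+2).choose k : ℚ) * bernoulli (p+2-k) * ∑ i ∈ Finset.Icc 1 n, S k r i
      = ((p:ℚ)+2) * ∑ i ∈ Finset.Icc 1 n, S (p+1) (r+1) i
    calc (∑ i ∈ Finset.Icc 1 n, S (p+2) r i) + ((p:ℚ)+2)/2 * ∑ i ∈ Finset.Icc 1 n, S (p+1) r i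
        + ∑ k ∈ Finset.Icc 1 p, ((p+2).choose k : ℚ) * bernoulli (p+2-k) * ∑ i ∈ Finset.Icc 1 n, S k r i
        = ∑ i ∈ Finset.Icc 1 n, (S (p+2) r i + ((p:ℚ)+2)/2 * S (p+1) r i
            + ∑ k ∈ Finset.Icc 1 p, ((p+2).choose k : ℚ) * bernoulli (p+2-k) * S k r i) := by
          simp only [Finset.sum_add_distrib, Finset.mul_sum]
          rw [Finset.sum_comm]
      _ = ∑ i ∈ Finset.Icc 1 n, ((p:ℚ)+2) * S (p+1) (r+1) i :=
          Finset.sum_congr rfl fun i _ => ih i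
      _ = ((p:ℚ)+2) * ∑ i ∈ Finset.Icc 1 n, S (p+1) (r+1) i := by rw [Finset.mul_sum]

theorem stmt_5 (m r n : ℕ) (hm : 2 ≤ m) (hn : 1 ≤ n) :
    ((m : ℚ) + r) * S m r n
      = (m : ℚ) * ((n : ℚ) + r / 2) * S (m - 1) r n
        - (r : ℚ) * ∑ k ∈ Finset.Icc 1 (m - 2),
            (m.choose k : ℚ) * bernoulli (m - k) * S k r n := by
  obtain ⟨p, rfl⟩ := Nat.exists_eq_add_of_le hm
  clear hm
  simp only [show 2 + p = p + 2 from by omega, show p + 2 - 1 = p + 1 from by omega,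
    show p + 2 - 2 = p from by omega] at *
  induction r generalizing n with
  | zero =>
    push_cast
    show ((p:ℚ)+2+0) * (n:ℚ)^(p+2) = ((p:ℚ)+2) * ((n:ℚ) + 0/2) * (n:ℚ)^(p+1) - 0 * _
    have : (n:ℚ)^(p+2) = n * (n:ℚ)^(p+1) := by ring
    rw [this]; ring
  | succ r ih =>
    clear hn
    induction n with
    | zero =>
      simp [S]
    | succ n ihn =>
      have step : ∀ (q r' : ℕ), S q (r'+1) (n+1) = S q (r'+1) n + S q r' (n+1) := by
        intro q r'
        show (∑ i ∈ Finset.Icc 1 (n+1), S q r' i) = _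
        rw [Finset.sum_Icc_succ_top (by omega : 1 ≤ n+1)]; rfl
      have hih := ih (n+1) (by omega)
      have hg := G p r (n+1)
      simp only [step] at hg ⊢
      simp only [mul_add, Finset.sum_add_distrib]
      push_cast at ihn hih hg ⊢
      linear_combination ihn + hih + hg
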